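/- Let E₁ = ε # φ₀ and let S be the power series Σ_{n≥0} E₁(2^{−n})(32w)ⁿ ∈ ℚ[[w]]. Then (1−16w)(1−4w)(1−2w)²·S = 4w(1−2w)² + (2w−12w²)·√(1−4w²), where √(1−4w²) denotes the unique power series in ℚ[[w]] with constant term 1 whose square is 1−4w². -/

import Mathlib

open scoped BigOperators

noncomputable section

attribute [local instance] Classical.propDecidable

/-- `I`: the set of dyadic rationals in `[0,1]`. -/
def dyadicI : Set ℚ := {t | 0 ≤ t ∧ t ≤ 1 ∧ ∃ i n : ℕ, t = (i : ℚ) / 2 ^ n}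

/-- `X` is the ℚ-vector space of functions `I → ℚ`. -/
abbrev X : Type := dyadicI → ℚ

lemma dyadicI_mem {i n : ℕ} (h : i ≤ 2 ^ n) : (i : ℚ) / 2 ^ n ∈ dyadicI := by
  refine ⟨by positivity, ?_, i, n, rfl⟩
  rw [div_le_one (by positivity)]
  exact_mod_cast h

lemma zero_mem_dyadicI : (0 : ℚ) ∈ dyadicI := by
  simpa using dyadicI_mem (i := 0) (n := 0) (by norm_num)

lemma one_mem_dyadicI : (1 : ℚ) ∈ dyadicI := by
  simpa using dyadicI_mem (i := 1) (n := 0) (by norm_num)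

lemma half_mem_dyadicI : (1 / 2 : ℚ) ∈ dyadicI := by
  have := dyadicI_mem (i := 1) (n := 1) (by norm_num)
  norm_num at this ⊢
  exact this

/-- Evaluation of `α : X` at a rational, extended by `0` off `I`. -/
def evI (α : X) (t : ℚ) : ℚ := if h : t ∈ dyadicI then α ⟨t, h⟩ else 0

/-- The map `T₀ : X → X`, `(T₀ α)(t) = α (t/2)`. -/
def T0 (α : X) : X := fun t => evI α (t.1 / 2)

/-- The map `T₁ : X → X`, `(T₁ α)(t) = α ((1+t)/2)`. -/
def T1 (α : X) : X := fun t => evI α ((1 + t.1) / 2)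

/-- Auxiliary recursion (on the exponent of the denominator) defining `α # β`. -/
def hashAux : ℕ → X → X → ℚ → ℚ
  | 0, α, β, t =>
      if t = 0 then 0 else (evI α 1 - evI α 0) * (evI β 1 - evI β 0)
  | n + 1, α, β, t =>
      if t ≤ 1 / 2 then
        hashAux n (T0 α) (T0 β) (2 * t) + hashAux n (T1 α) (T1 β) (2 * t)
      else
        hashAux n (T0 α) (T0 β) 1 + hashAux n (T1 α) (T1 β) 1 +
          hashAux n (T0 α) (T1 β) (2 * t - 1) + hashAux n (T1 α) (T0 β) (2 * t - 1)

/-- The product `α # β` on `X`. -/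
def hash (α β : X) : X := fun t => hashAux (padicValNat 2 t.1.den) α β t.1

/-- The element `t ↦ t` of `X`. -/
def tId : X := fun t => t.1

/-- The element `ε : t ↦ t − t²` of `X`. -/
def epsX : X := fun t => t.1 - t.1 ^ 2

/-- The constant function `1` in `X`. -/
def oneX : X := fun _ => (1 : ℚ)

/-- Convexity: `2α(i/q) ≥ α((i−1)/q) + α((i+1)/q)` for all powers of two `q = 2^n`, `0 < i < q`. -/
def ConvexX (α : X) : Prop :=
  ∀ n i : ℕ, 0 < i → i < 2 ^ n →
    evI α (((i : ℚ) - 1) / 2 ^ n) + evI α (((i : ℚ) + 1) / 2 ^ n)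
      ≤ 2 * evI α ((i : ℚ) / 2 ^ n)

/-- `α` is Lipschitz with constant `m`. -/
def LipschitzQ (m : ℚ) (α : X) : Prop :=
  ∀ s t : dyadicI, |α s - α t| ≤ m * |s.1 - t.1|

/-- The point `2^{-n}` of `I`. -/
def invPow (n : ℕ) : dyadicI :=
  ⟨1 / 2 ^ n, by simpa using dyadicI_mem (i := 1) (n := n) Nat.one_le_two_pow⟩

/-- `μ` is the Hilbert–Kunz multiplicity of `α`, i.e. `μ = lim 2^n α(2^{-n})`. -/
def IsHKmu (α : X) (μ : ℝ) : Prop :=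
  Filter.Tendsto (fun n : ℕ => ((2 ^ n * α (invPow n) : ℚ) : ℝ)) Filter.atTop (nhds μ)

/-- The series `S_α = Σ α(2^{-n}) (2w)^n = Σ (2^n α(2^{-n})) w^n`. -/
def hkSeries (α : X) : PowerSeries ℚ := PowerSeries.mk fun n => 2 ^ n * α (invPow n)

/-- Auxiliary recursion defining the functions `φ_m`. -/
def phiAux : ℕ → ℕ → ℚ → ℚ
  | 0, _, _ => 0
  | n + 1, m, t =>
      if t ≤ 1 / 2 then
        if m % 2 = 0 then (phiAux n (m + 1) (2 * t) + (8 * (m : ℚ) + 6) * t) / 8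
        else (phiAux n (m - 1) (2 * t) + ((2 * t) - (2 * t) ^ 2) + (8 * (m : ℚ) + 6) * t) / 8
      else
        if m = 0 then (phiAux n 0 (2 * t - 1) + 6 * (1 - t)) / 8
        else if m % 2 = 0 then
          (phiAux n (m - 1) (2 * t - 1) + ((2 * t - 1) - (2 * t - 1) ^ 2)
            + (8 * (m : ℚ) + 6) * (1 - t)) / 8
        else (phiAux n (m + 1) (2 * t - 1) + (8 * (m : ℚ) + 6) * (1 - t)) / 8

/-- The functions `φ_m ∈ X` of Definition 2.2. -/
def phiM (m : ℕ) : X := fun t => phiAux (padicValNat 2 t.1.den) m t.1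

/-- `ℕ` with the Nim-sum (bitwise XOR) as its (commutative) monoid operation. -/
def NimNat : Type := ℕ

instance : CommMonoid NimNat where
  mul a b := Nat.xor a b
  one := (0 : ℕ)
  mul_assoc := Nat.xor_assoc
  mul_comm := Nat.xor_comm
  one_mul := Nat.zero_xor
  mul_one := Nat.xor_zero

/-- The ring `Γ`: free `ℤ`-module on `λ₀, λ₁, …` with `λᵢλⱼ = λ_{i XOR j}`. -/
abbrev GammaZ : Type := MonoidAlgebra ℤ NimNat

/-- The ring `Γ_Q = Γ ⊗ ℚ`. -/
abbrev GammaQ : Type := MonoidAlgebra ℚ NimNat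

/-- The basis element `λᵢ` of `Γ`. -/
def lamZ (i : ℕ) : GammaZ := MonoidAlgebra.single (show NimNat from i) 1

/-- The basis element `λᵢ` of `Γ_Q`. -/
def lamQ (i : ℕ) : GammaQ := MonoidAlgebra.single (show NimNat from i) 1

/-- `δ_r = λ₀ − λ₁ + ⋯ + (−1)^{r−1} λ_{r−1}` in `Γ`. -/
def deltaZ (r : ℕ) : GammaZ := ∑ i ∈ Finset.range r, ((-1 : ℤ) ^ i) • lamZ i

/-- `δ_r` in `Γ_Q`. -/
def deltaQ (r : ℕ) : GammaQ := ∑ i ∈ Finset.range r, ((-1 : ℚ) ^ i) • lamQ i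

/-- `L_n(α) = Σ_{i=0}^{2^n−1} (α((i+1)/2^n) − α(i/2^n)) (−1)^i λᵢ ∈ Γ_Q`. -/
def Ln (n : ℕ) (α : X) : GammaQ :=
  ∑ i ∈ Finset.range (2 ^ n),
    ((-1 : ℚ) ^ i * (evI α (((i : ℚ) + 1) / 2 ^ n) - evI α ((i : ℚ) / 2 ^ n))) • lamQ i

/-- The Hilbert–Kunz function `φ_f ∈ X` of a power series `f`:
`φ_f(i/q) = q^{-r} · dim_F F[[u₁,…,u_r]]/(u₁^q,…,u_r^q,f^i)`. -/
def phiF {F : Type} [Field F] {σ : Type} (f : MvPowerSeries σ F) : X := fun t =>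
  ((Module.finrank F
      (MvPowerSeries σ F ⧸ Ideal.span
        (Set.range (fun j : σ => (MvPowerSeries.X j : MvPowerSeries σ F) ^ t.1.den)
          ∪ {f ^ t.1.num.toNat}))) : ℚ)
    / (t.1.den : ℚ) ^ (Nat.card σ)

/-- The natural inclusion `F[[u_j : j ∈ σ]] → F[[u_j : j ∈ τ]]` along an injection `e : σ → τ`. -/
def embPS {F : Type} [Field F] {σ τ : Type} (e : σ → τ) (f : MvPowerSeries σ F) :
    MvPowerSeries τ F := fun d =>
  if h : ∃ d' : σ →₀ ℕ, Finsupp.mapDomain e d' = d then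
    MvPowerSeries.coeff h.choose f
  else 0

/-! ### Infrastructure -/

lemma mem_dyadic_of (i n : ℕ) (h : i ≤ 2^n) : ((i:ℚ))/2^n ∈ dyadicI := dyadicI_mem h

lemma dyadic_rep {t : ℚ} (ht : t ∈ dyadicI) : ∃ i n : ℕ, i ≤ 2^n ∧ t = (i:ℚ)/2^n := by
  obtain ⟨h0, h1, i, n, rfl⟩ := ht
  refine ⟨i, n, ?_, rfl⟩
  by_contra h
  push_neg at h
  have : (1:ℚ) < (i:ℚ)/2^n := by
    rw [lt_div_iff₀ (by positivity)]
    have : (2:ℚ)^n < (i:ℚ) := by exact_mod_cast (by exact_mod_cast h : ((2^n : ℕ):ℚ) < i)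
    linarith
  linarith

lemma half_mem {t : ℚ} (ht : t ∈ dyadicI) : t/2 ∈ dyadicI := by
  obtain ⟨i, n, hi, rfl⟩ := dyadic_rep ht
  have : ((i:ℚ))/2^n/2 = ((i:ℚ))/2^(n+1) := by rw [pow_succ]; ring
  rw [this]
  exact dyadicI_mem (le_trans hi (by exact Nat.pow_le_pow_right (by norm_num) (Nat.le_succ n)))

lemma half_shift_mem {t : ℚ} (ht : t ∈ dyadicI) : (1+t)/2 ∈ dyadicI := by
  obtain ⟨i, n, hi, rfl⟩ := dyadic_rep ht
  have : (1+((i:ℚ))/2^n)/2 = (((2^n + i : ℕ) : ℚ))/2^(n+1) := by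
    push_cast
    rw [pow_succ]
    field_simp
    try ring
  rw [this]
  exact dyadicI_mem (by omega : 2^n + i ≤ 2^(n+1))

lemma evI_of_mem (α : X) {t : ℚ} (h : t ∈ dyadicI) : evI α t = α ⟨t, h⟩ := dif_pos h

lemma evI_add (α β : X) (t : ℚ) : evI (α + β) t = evI α t + evI β t := by
  unfold evI; split <;> simp

lemma evI_smul (c : ℚ) (α : X) (t : ℚ) : evI (c • α) t = c * evI α t := by
  unfold evI; split <;> simp

lemma T0_add (α β : X) : T0 (α + β) = T0 α + T0 β := by
  funext t; simp [T0, evI_add]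

lemma T1_add (α β : X) : T1 (α + β) = T1 α + T1 β := by
  funext t; simp [T1, evI_add]

lemma T0_smul (c : ℚ) (α : X) : T0 (c • α) = c • T0 α := by
  funext t; simp [T0, evI_smul]

lemma T1_smul (c : ℚ) (α : X) : T1 (c • α) = c • T1 α := by
  funext t; simp [T1, evI_smul]

lemma T0_one : T0 oneX = oneX := by
  funext t; simp [T0, oneX, evI_of_mem _ (half_mem t.2)]

lemma T1_one : T1 oneX = oneX := by
  funext t; simp [T1, oneX, evI_of_mem _ (half_shift_mem t.2)]

/-! ### Bilinearity of hashAux -/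

lemma hashAux_add_left : ∀ (n : ℕ) (α β γ : X) (t : ℚ),
    hashAux n (α + β) γ t = hashAux n α γ t + hashAux n β γ t := by
  intro n
  induction n with
  | zero =>
    intro α β γ t
    simp only [hashAux, evI_add]
    split <;> ring
  | succ n ih =>
    intro α β γ t
    simp only [hashAux, T0_add, T1_add]
    split <;> rw [ih, ih] <;> [skip; rw [ih, ih]] <;> ring

lemma hashAux_add_right : ∀ (n : ℕ) (α β γ : X) (t : ℚ),
    hashAux n α (β + γ) t = hashAux n α β t + hashAux n α γ t := by
  intro n
  induction n with
  | zero =>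
    intro α β γ t
    simp only [hashAux, evI_add]
    split <;> ring
  | succ n ih =>
    intro α β γ t
    simp only [hashAux, T0_add, T1_add]
    split <;> rw [ih, ih] <;> [skip; rw [ih, ih]] <;> ring

lemma hashAux_smul_left : ∀ (n : ℕ) (c : ℚ) (α β : X) (t : ℚ),
    hashAux n (c • α) β t = c * hashAux n α β t := by
  intro n
  induction n with
  | zero =>
    intro c α β t
    simp only [hashAux, evI_smul]
    split <;> ring
  | succ n ih =>
    intro c α β t
    simp only [hashAux, T0_smul, T1_smul]
    split <;> rw [ih, ih] <;> [skip; rw [ih, ih]] <;> ring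

lemma hashAux_smul_right : ∀ (n : ℕ) (c : ℚ) (α β : X) (t : ℚ),
    hashAux n α (c • β) t = c * hashAux n α β t := by
  intro n
  induction n with
  | zero =>
    intro c α β t
    simp only [hashAux, evI_smul]
    split <;> ring
  | succ n ih =>
    intro c α β t
    simp only [hashAux, T0_smul, T1_smul]
    split <;> rw [ih, ih] <;> [skip; rw [ih, ih]] <;> ring

lemma hashAux_one_left : ∀ (n : ℕ) (β : X) (t : ℚ), hashAux n oneX β t = 0 := by
  intro n
  induction n with
  | zero =>
    intro β t
    have h1 : evI oneX 1 = 1 := by rw [evI_of_mem _ one_mem_dyadicI]; rfl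
    have h0 : evI oneX 0 = 1 := by rw [evI_of_mem _ zero_mem_dyadicI]; rfl
    simp [hashAux, h1, h0]
  | succ n ih =>
    intro β t
    simp [hashAux, T0_one, T1_one, ih]

lemma hashAux_one_right : ∀ (n : ℕ) (α : X) (t : ℚ), hashAux n α oneX t = 0 := by
  intro n
  induction n with
  | zero =>
    intro α t
    have h1 : evI oneX 1 = 1 := by rw [evI_of_mem _ one_mem_dyadicI]; rfl
    have h0 : evI oneX 0 = 1 := by rw [evI_of_mem _ zero_mem_dyadicI]; rfl
    simp [hashAux, h1, h0]
  | succ n ih =>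
    intro α t
    simp [hashAux, T0_one, T1_one, ih]

lemma hstep (n : ℕ) (α β : X) :
    hashAux (n+1) α β (1/2^(n+1)) =
      hashAux n (T0 α) (T0 β) (1/2^n) + hashAux n (T1 α) (T1 β) (1/2^n) := by
  have hle : (1:ℚ)/2^(n+1) ≤ 1/2 := by
    rw [div_le_div_iff₀ (by positivity) (by norm_num)]
    have : (2:ℚ) ≤ 2^(n+1) := by
      calc (2:ℚ) = 2^1 := by norm_num
      _ ≤ 2^(n+1) := by exact pow_le_pow_right₀ (by norm_num) (by omega)
    linarith
  have h2 : 2 * ((1:ℚ)/2^(n+1)) = 1/2^n := by rw [pow_succ]; ring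
  simp only [hashAux, if_pos hle, h2]
/-! ### phiAux lemmas -/

lemma phiAux_succ (n : ℕ) (m : ℕ) (t : ℚ) : phiAux (n+1) m t =
    (if t ≤ 1 / 2 then
        if m % 2 = 0 then (phiAux n (m + 1) (2 * t) + (8 * (m : ℚ) + 6) * t) / 8
        else (phiAux n (m - 1) (2 * t) + ((2 * t) - (2 * t) ^ 2) + (8 * (m : ℚ) + 6) * t) / 8
      else
        if m = 0 then (phiAux n 0 (2 * t - 1) + 6 * (1 - t)) / 8
        else if m % 2 = 0 then
          (phiAux n (m - 1) (2 * t - 1) + ((2 * t - 1) - (2 * t - 1) ^ 2)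
            + (8 * (m : ℚ) + 6) * (1 - t)) / 8
        else (phiAux n (m + 1) (2 * t - 1) + (8 * (m : ℚ) + 6) * (1 - t)) / 8) := rfl

lemma phiAux_zero_pt : ∀ n m, phiAux n m 0 = 0 := by
  intro n
  induction n with
  | zero => intro m; rfl
  | succ n ih =>
    intro m
    rw [phiAux_succ, if_pos (by norm_num : (0:ℚ) ≤ 1/2)]
    split <;> norm_num [ih]

lemma phiAux_one_pt : ∀ n m, phiAux n m 1 = 0 := by
  intro n
  induction n with
  | zero => intro m; rfl
  | succ n ih =>
    intro m
    rw [phiAux_succ, if_neg (by norm_num : ¬ (1:ℚ) ≤ 1/2)]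
    have h21 : (2:ℚ) * 1 - 1 = 1 := by norm_num
    split
    · rw [h21]; norm_num [ih]
    · split <;> rw [h21] <;> norm_num [ih]

lemma phiAux_stab : ∀ (n i : ℕ), i ≤ 2^n → ∀ m,
    phiAux (n+1) m ((i:ℚ)/2^n) = phiAux n m ((i:ℚ)/2^n) := by
  intro n
  induction n with
  | zero =>
    intro i hi m
    interval_cases i
    · norm_num [phiAux_zero_pt]
    · norm_num [phiAux_one_pt]
  | succ n ih =>
    intro i hi m
    by_cases hle : i ≤ 2^n
    · have ht : ((i:ℚ))/2^(n+1) ≤ 1/2 := by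
        rw [div_le_div_iff₀ (by positivity) (by norm_num), pow_succ]
        have : (i:ℚ) ≤ 2^n := by exact_mod_cast hle
        linarith
      have h2 : 2 * ((i:ℚ)/2^(n+1)) = (i:ℚ)/2^n := by rw [pow_succ]; ring
      refine ((phiAux_succ (n+1) m _).trans ?_).trans (phiAux_succ n m _).symm
      rw [if_pos ht, if_pos ht, h2]
      split <;> rw [ih i hle]
    · push_neg at hle
      have heq : ¬ ((i:ℚ)/2^(n+1) ≤ 1/2) := by
        rw [div_le_div_iff₀ (by positivity) (by norm_num), pow_succ]
        push_neg
        have : (2:ℚ)^n < (i:ℚ) := by exact_mod_cast hle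
        linarith
      have h2 : 2 * ((i:ℚ)/2^(n+1)) - 1 = ((i - 2^n : ℕ):ℚ)/2^n := by
        have hcast : ((i - 2^n : ℕ):ℚ) = (i:ℚ) - 2^n := by
          push_cast [Nat.cast_sub (le_of_lt hle)]; ring
        rw [hcast, pow_succ]
        field_simp
      have hle2 : i - 2^n ≤ 2^n := by
        have := hi
        rw [pow_succ] at this
        omega
      refine ((phiAux_succ (n+1) m _).trans ?_).trans (phiAux_succ n m _).symm
      rw [if_neg heq, if_neg heq, h2]
      split
      · rw [ih _ hle2]
      · split <;> rw [ih _ hle2]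

lemma phiAux_stab' : ∀ (d n i : ℕ), i ≤ 2^n → ∀ m,
    phiAux (n+d) m ((i:ℚ)/2^n) = phiAux n m ((i:ℚ)/2^n) := by
  intro d
  induction d with
  | zero => intro n i hi m; rfl
  | succ d ih =>
    intro n i hi m
    have hrep : ((i:ℚ))/2^n = (((i * 2^d : ℕ)):ℚ)/2^(n+d) := by
      push_cast
      rw [pow_add]
      field_simp
    have hb : i * 2^d ≤ 2^(n+d) := by
      rw [pow_add]
      exact Nat.mul_le_mul_right _ hi
    calc phiAux (n + (d+1)) m ((i:ℚ)/2^n)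
        = phiAux ((n+d)+1) m (((i * 2^d : ℕ):ℚ)/2^(n+d)) := by rw [← hrep]; ring_nf
      _ = phiAux (n+d) m (((i * 2^d : ℕ):ℚ)/2^(n+d)) := phiAux_stab (n+d) _ hb m
      _ = phiAux n m ((i:ℚ)/2^n) := by rw [← hrep]; exact ih n i hi m

lemma den_dvd_pow (i n : ℕ) : (((i:ℚ))/2^n).den ∣ 2^n := by
  have h : ((i:ℚ))/2^n = Rat.divInt (i:ℤ) ((2^n : ℤ)) := by
    rw [Rat.divInt_eq_div]; push_cast; ring
  rw [h]
  have := Rat.den_dvd (i:ℤ) (2^n:ℤ)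
  exact_mod_cast this

/-- The master evaluation lemma for `phiM`. -/
lemma phiM_eval (m : ℕ) {t : ℚ} (h : t ∈ dyadicI) {i n : ℕ} (hi : i ≤ 2^n)
    (ht : t = (i:ℚ)/2^n) : phiM m ⟨t, h⟩ = phiAux n m t := by
  have hden : t.den ∣ 2^n := ht ▸ den_dvd_pow i n
  obtain ⟨k, hkn, hk⟩ := (Nat.dvd_prime_pow Nat.prime_two).mp hden
  have hval : padicValNat 2 t.den = k := by rw [hk]; exact padicValNat.prime_pow k
  have h0 : 0 ≤ t := h.1
  have h1 : t ≤ 1 := h.2.1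
  have hnum : t.num.toNat ≤ 2^k := by
    have : t.num ≤ t.den := by
      rw [← Rat.num_div_den t] at h1
      have hd : (0:ℚ) < t.den := by exact_mod_cast t.pos
      rw [div_le_one hd] at h1
      exact_mod_cast h1
    omega
  have hrep : t = ((t.num.toNat : ℚ))/2^k := by
    have hnn : (0:ℤ) ≤ t.num := Rat.num_nonneg.mpr h0
    have hd : ((t.den:ℚ)) = 2^k := by rw [hk]; push_cast; ring
    have hn' : ((t.num.toNat : ℚ)) = (t.num : ℚ) := by
      exact_mod_cast congrArg (Int.cast : ℤ → ℚ) (Int.toNat_of_nonneg hnn)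
    rw [← hd, hn']
    exact (Rat.num_div_den t).symm
  show phiAux (padicValNat 2 t.den) m t = phiAux n m t
  rw [hval]
  obtain ⟨d, rfl⟩ := Nat.exists_eq_add_of_le hkn
  calc phiAux k m t = phiAux k m ((t.num.toNat:ℚ)/2^k) := by rw [← hrep]
    _ = phiAux (k+d) m ((t.num.toNat:ℚ)/2^k) := (phiAux_stab' d k _ hnum m).symm
    _ = phiAux (k+d) m t := by rw [← hrep]

lemma phiM_zero (m : ℕ) (h : (0:ℚ) ∈ dyadicI) : phiM m ⟨0, h⟩ = 0 := by
  rw [phiM_eval m h (i := 0) (n := 0) (by norm_num) (by norm_num)]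
  exact phiAux_zero_pt 0 m

lemma phiM_one (m : ℕ) (h : (1:ℚ) ∈ dyadicI) : phiM m ⟨1, h⟩ = 0 := by
  rw [phiM_eval m h (i := 1) (n := 0) (by norm_num) (by norm_num)]
  exact phiAux_one_pt 0 m
/-! ### Functional equations for T0/T1 -/

lemma T0_eps : T0 epsX = (1/4:ℚ) • epsX + (1/4:ℚ) • tId := by
  funext x
  show evI epsX (x.1/2) = _
  rw [evI_of_mem _ (half_mem x.2)]
  show x.1/2 - (x.1/2)^2 = (1/4) * (x.1 - x.1^2) + (1/4) * x.1
  ring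

lemma T1_eps : T1 epsX = (1/4:ℚ) • epsX + (1/4:ℚ) • oneX + (-(1/4):ℚ) • tId := by
  funext x
  show evI epsX ((1+x.1)/2) = _
  rw [evI_of_mem _ (half_shift_mem x.2)]
  show (1+x.1)/2 - ((1+x.1)/2)^2 = (1/4) * (x.1 - x.1^2) + (1/4) * 1 + (-(1/4)) * x.1
  ring

lemma T0_t : T0 tId = (1/2:ℚ) • tId := by
  funext x
  show evI tId (x.1/2) = _
  rw [evI_of_mem _ (half_mem x.2)]
  show x.1/2 = (1/2) * x.1
  ring

lemma T1_t : T1 tId = (1/2:ℚ) • oneX + (1/2:ℚ) • tId := by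
  funext x
  show evI tId ((1+x.1)/2) = _
  rw [evI_of_mem _ (half_shift_mem x.2)]
  show (1+x.1)/2 = (1/2) * 1 + (1/2) * x.1
  ring

lemma rep_bound_succ {i n : ℕ} (hi : i ≤ 2^n) : i ≤ 2^(n+1) :=
  le_trans hi (Nat.pow_le_pow_right (by norm_num) (Nat.le_succ n))

lemma half_rep {t : ℚ} {i n : ℕ} (hrep : t = (i:ℚ)/2^n) : t/2 = ((i:ℚ))/2^(n+1) := by
  rw [hrep, pow_succ]; ring

lemma shift_rep {t : ℚ} {i n : ℕ} (hrep : t = (i:ℚ)/2^n) :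
    (1+t)/2 = (((2^n + i : ℕ)):ℚ)/2^(n+1) := by
  rw [hrep]
  push_cast
  rw [pow_succ]
  field_simp
  try ring

/-- T0 on φ_m for even m. -/
lemma T0_phi_even (m : ℕ) (hm : m % 2 = 0) :
    T0 (phiM m) = (1/8:ℚ) • phiM (m+1) + ((4*(m:ℚ)+3)/8) • tId := by
  funext x
  obtain ⟨i, n, hi, hrep⟩ := dyadic_rep x.2
  show evI (phiM m) (x.1/2) = _
  rw [evI_of_mem _ (half_mem x.2),
    phiM_eval m (half_mem x.2) (rep_bound_succ hi) (half_rep hrep),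
    phiAux_succ, if_pos (by
      have h1 : x.1 ≤ 1 := x.2.2.1
      linarith : x.1/2 ≤ 1/2),
    if_pos hm, show 2*(x.1/2) = x.1 from by ring, ← phiM_eval (m+1) x.2 hi hrep]
  show _ = (1/8) * phiM (m+1) x + ((4*(m:ℚ)+3)/8) * x.1
  push_cast
  try ring

/-- T0 on φ_{m+1} for even m (odd case). -/
lemma T0_phi_odd (m : ℕ) (hm : m % 2 = 0) :
    T0 (phiM (m+1)) = (1/8:ℚ) • phiM m + (1/8:ℚ) • epsX + ((4*(m:ℚ)+7)/8) • tId := by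
  funext x
  obtain ⟨i, n, hi, hrep⟩ := dyadic_rep x.2
  show evI (phiM (m+1)) (x.1/2) = _
  rw [evI_of_mem _ (half_mem x.2),
    phiM_eval (m+1) (half_mem x.2) (rep_bound_succ hi) (half_rep hrep),
    phiAux_succ, if_pos (by
      have h1 : x.1 ≤ 1 := x.2.2.1
      linarith : x.1/2 ≤ 1/2),
    if_neg (by omega : ¬ (m+1) % 2 = 0), Nat.add_sub_cancel,
    show 2*(x.1/2) = x.1 from by ring, ← phiM_eval m x.2 hi hrep]
  show _ = (1/8) * phiM m x + (1/8) * (x.1 - x.1^2) + ((4*(m:ℚ)+7)/8) * x.1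
  push_cast
  ring

lemma pos_rep_ne {t : ℚ} {i n : ℕ} (hrep : t = (i:ℚ)/2^n) (hi0 : i ≠ 0) (hle : i ≤ 2^n) :
    ¬ ((1+t)/2 ≤ 1/2) := by
  have : (0:ℚ) < (i:ℚ)/2^n := by
    apply div_pos _ (by positivity)
    exact_mod_cast Nat.pos_of_ne_zero hi0
  rw [hrep]
  linarith

/-- T1 on φ_0. -/
lemma T1_phi_zero : T1 (phiM 0) = (1/8:ℚ) • phiM 0 + (3/8:ℚ) • oneX + (-(3/8):ℚ) • tId := by
  funext x
  obtain ⟨i, n, hi, hrep⟩ := dyadic_rep x.2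
  show evI (phiM 0) ((1+x.1)/2) = _
  rw [evI_of_mem _ (half_shift_mem x.2),
    phiM_eval 0 (half_shift_mem x.2) (by omega : 2^n + i ≤ 2^(n+1)) (shift_rep hrep),
    phiAux_succ]
  by_cases hi0 : i = 0
  · have hx0 : x.1 = 0 := by rw [hrep, hi0]; norm_num
    have hphi : phiM 0 x = 0 := by
      have hx : x = ⟨0, zero_mem_dyadicI⟩ := Subtype.ext hx0
      rw [hx, phiM_zero]
    rw [if_pos (by rw [hx0]; norm_num : (1+x.1)/2 ≤ 1/2), if_pos (rfl : 0 % 2 = 0),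
      show 2*((1+x.1)/2) = 1 + x.1 from by ring, hx0,
      show (1:ℚ) + 0 = 1 from by norm_num, phiAux_one_pt]
    simp only [Pi.add_apply, Pi.smul_apply, smul_eq_mul]
    rw [hphi]
    simp only [oneX, tId, hx0]
    norm_num
  · rw [if_neg (pos_rep_ne hrep hi0 hi), if_pos rfl,
      show 2*((1+x.1)/2) - 1 = x.1 from by ring, ← phiM_eval 0 x.2 hi hrep]
    show _ = (1/8) * phiM 0 x + (3/8) * 1 + (-(3/8)) * x.1
    ring

/-- T1 on φ_{m+1} for odd m (so m+1 even and nonzero). -/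
lemma T1_phi_even (m : ℕ) (hm : m % 2 = 1) :
    T1 (phiM (m+1)) = (1/8:ℚ) • phiM m + (1/8:ℚ) • epsX
      + ((4*(m:ℚ)+7)/8) • oneX + (-((4*(m:ℚ)+7)/8)) • tId := by
  funext x
  obtain ⟨i, n, hi, hrep⟩ := dyadic_rep x.2
  show evI (phiM (m+1)) ((1+x.1)/2) = _
  rw [evI_of_mem _ (half_shift_mem x.2),
    phiM_eval (m+1) (half_shift_mem x.2) (by omega : 2^n + i ≤ 2^(n+1)) (shift_rep hrep),
    phiAux_succ]
  by_cases hi0 : i = 0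
  · have hx0 : x.1 = 0 := by rw [hrep, hi0]; norm_num
    have hphi : phiM m x = 0 := by
      have hx : x = ⟨0, zero_mem_dyadicI⟩ := Subtype.ext hx0
      rw [hx, phiM_zero]
    rw [if_pos (by rw [hx0]; norm_num : (1+x.1)/2 ≤ 1/2),
      if_pos (by omega : (m+1) % 2 = 0),
      show 2*((1+x.1)/2) = 1 + x.1 from by ring, hx0,
      show (1:ℚ) + 0 = 1 from by norm_num, phiAux_one_pt]
    simp only [Pi.add_apply, Pi.smul_apply, smul_eq_mul]
    rw [hphi]
    simp only [oneX, tId, epsX, hx0]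
    push_cast
    norm_num
    try ring
  · rw [if_neg (pos_rep_ne hrep hi0 hi),
      if_neg (by omega : ¬ m+1 = 0),
      if_pos (by omega : (m+1) % 2 = 0), Nat.add_sub_cancel,
      show 2*((1+x.1)/2) - 1 = x.1 from by ring, ← phiM_eval m x.2 hi hrep]
    show _ = (1/8) * phiM m x + (1/8) * (x.1 - x.1^2)
        + ((4*(m:ℚ)+7)/8) * 1 + (-((4*(m:ℚ)+7)/8)) * x.1
    push_cast
    ring

/-- T1 on φ_m for odd m. -/
lemma T1_phi_odd (m : ℕ) (hm : m % 2 = 1) :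
    T1 (phiM m) = (1/8:ℚ) • phiM (m+1)
      + ((4*(m:ℚ)+3)/8) • oneX + (-((4*(m:ℚ)+3)/8)) • tId := by
  funext x
  obtain ⟨i, n, hi, hrep⟩ := dyadic_rep x.2
  show evI (phiM m) ((1+x.1)/2) = _
  rw [evI_of_mem _ (half_shift_mem x.2),
    phiM_eval m (half_shift_mem x.2) (by omega : 2^n + i ≤ 2^(n+1)) (shift_rep hrep),
    phiAux_succ]
  by_cases hi0 : i = 0
  · have hx0 : x.1 = 0 := by rw [hrep, hi0]; norm_num
    have hphi : phiM (m+1) x = 0 := by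
      have hx : x = ⟨0, zero_mem_dyadicI⟩ := Subtype.ext hx0
      rw [hx, phiM_zero]
    rw [if_pos (by rw [hx0]; norm_num : (1+x.1)/2 ≤ 1/2),
      if_neg (by omega : ¬ m % 2 = 0),
      show 2*((1+x.1)/2) = 1 + x.1 from by ring, hx0,
      show (1:ℚ) + 0 = 1 from by norm_num, phiAux_one_pt]
    simp only [Pi.add_apply, Pi.smul_apply, smul_eq_mul]
    rw [hphi]
    simp only [oneX, tId, hx0]
    push_cast
    norm_num
    try ring
  · rw [if_neg (pos_rep_ne hrep hi0 hi),
      if_neg (by omega : ¬ m = 0),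
      if_neg (by omega : ¬ m % 2 = 0),
      show 2*((1+x.1)/2) - 1 = x.1 from by ring, ← phiM_eval (m+1) x.2 hi hrep]
    show _ = (1/8) * phiM (m+1) x + ((4*(m:ℚ)+3)/8) * 1 + (-((4*(m:ℚ)+3)/8)) * x.1
    ring
/-! ### Values of the basic hash sequences -/

lemma evI_t_one : evI tId 1 = 1 := by rw [evI_of_mem _ one_mem_dyadicI]; rfl
lemma evI_t_zero : evI tId 0 = 0 := by rw [evI_of_mem _ zero_mem_dyadicI]; rfl
lemma evI_eps_one : evI epsX 1 = 0 := by
  rw [evI_of_mem _ one_mem_dyadicI]; show (1:ℚ) - 1^2 = 0; norm_num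
lemma evI_eps_zero : evI epsX 0 = 0 := by
  rw [evI_of_mem _ zero_mem_dyadicI]; show (0:ℚ) - 0^2 = 0; norm_num
lemma evI_phi_one (m : ℕ) : evI (phiM m) 1 = 0 := by
  rw [evI_of_mem _ one_mem_dyadicI, phiM_one]
lemma evI_phi_zero (m : ℕ) : evI (phiM m) 0 = 0 := by
  rw [evI_of_mem _ zero_mem_dyadicI, phiM_zero]

lemma hashAux_zero_apply (α β : X) :
    hashAux 0 α β ((1:ℚ)/2^0) = (evI α 1 - evI α 0) * (evI β 1 - evI β 0) := by
  show (if ((1:ℚ)/2^0) = 0 then 0 else _) = _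
  rw [if_neg (by norm_num)]

lemma hash_t_t : ∀ n, hashAux n tId tId ((1:ℚ)/2^n) = (1/2)^n := by
  intro n
  induction n with
  | zero => rw [hashAux_zero_apply, evI_t_one, evI_t_zero]; norm_num
  | succ n ih =>
    rw [hstep, T0_t, T1_t]
    simp only [hashAux_add_left, hashAux_add_right, hashAux_smul_left, hashAux_smul_right,
      hashAux_one_left, hashAux_one_right, ih]
    ring

lemma hash_t_eps : ∀ n, hashAux n tId epsX ((1:ℚ)/2^n) = 0 := by
  intro n
  induction n with
  | zero => rw [hashAux_zero_apply, evI_eps_one, evI_eps_zero]; norm_num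
  | succ n ih =>
    rw [hstep, T0_t, T1_t, T0_eps, T1_eps]
    simp only [hashAux_add_left, hashAux_add_right, hashAux_smul_left, hashAux_smul_right,
      hashAux_one_left, hashAux_one_right, ih, hash_t_t]
    ring

lemma hash_eps_t : ∀ n, hashAux n epsX tId ((1:ℚ)/2^n) = 0 := by
  intro n
  induction n with
  | zero => rw [hashAux_zero_apply, evI_eps_one, evI_eps_zero]; norm_num
  | succ n ih =>
    rw [hstep, T0_t, T1_t, T0_eps, T1_eps]
    simp only [hashAux_add_left, hashAux_add_right, hashAux_smul_left, hashAux_smul_right,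
      hashAux_one_left, hashAux_one_right, ih, hash_t_t]
    ring

lemma hash_eps_eps : ∀ n, hashAux n epsX epsX ((1:ℚ)/2^n) = ((1/2)^n - (1/8)^n)/3 := by
  intro n
  induction n with
  | zero => rw [hashAux_zero_apply, evI_eps_one, evI_eps_zero]; norm_num
  | succ n ih =>
    rw [hstep, T0_eps, T1_eps]
    simp only [hashAux_add_left, hashAux_add_right, hashAux_smul_left, hashAux_smul_right,
      hashAux_one_left, hashAux_one_right, ih, hash_t_t, hash_t_eps, hash_eps_t]
    ring

lemma hash_t_phi : ∀ n m, hashAux n tId (phiM m) ((1:ℚ)/2^n) = 0 := by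
  intro n
  induction n with
  | zero => intro m; rw [hashAux_zero_apply, evI_phi_one, evI_phi_zero]; norm_num
  | succ n ih =>
    intro m
    match m, Nat.even_or_odd m with
    | 0, _ =>
      rw [hstep, T0_t, T1_t, T0_phi_even 0 rfl, T1_phi_zero]
      simp only [hashAux_add_left, hashAux_add_right, hashAux_smul_left, hashAux_smul_right,
        hashAux_one_left, hashAux_one_right, ih, hash_t_t]
      ring
    | (k+1), Or.inr hodd =>
      have hk : k % 2 = 0 := by
        rcases hodd with ⟨j, hj⟩; omega
      rw [hstep, T0_t, T1_t, T0_phi_odd k hk, T1_phi_odd (k+1) (by omega)]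
      simp only [hashAux_add_left, hashAux_add_right, hashAux_smul_left, hashAux_smul_right,
        hashAux_one_left, hashAux_one_right, ih, hash_t_t, hash_t_eps]
      push_cast
      ring
    | (k+1), Or.inl heven =>
      have hk : k % 2 = 1 := by
        rcases heven with ⟨j, hj⟩; omega
      rw [hstep, T0_t, T1_t, T0_phi_even (k+1) (by omega), T1_phi_even k hk]
      simp only [hashAux_add_left, hashAux_add_right, hashAux_smul_left, hashAux_smul_right,
        hashAux_one_left, hashAux_one_right, ih, hash_t_t, hash_t_eps]
      push_cast
      ring
/-! ### Power series side -/

/-- coefficient sequences -/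
def pcf (n : ℕ) : ℚ := 19/42*16^n - 1/6*4^n - 2/7*2^n
def qcf (n : ℕ) : ℚ := 4/7*16^n - 4/7*2^n
def rcf (n : ℕ) : ℚ := -5/294*16^n - 1/6*4^n + (9/49 + 2/7*(n:ℚ))*2^n

def psP : PowerSeries ℚ := PowerSeries.mk pcf
def psQ : PowerSeries ℚ := PowerSeries.mk qcf
def psR : PowerSeries ℚ := PowerSeries.mk rcf

/-- The main family of power series. -/
def FmS (L : PowerSeries ℚ) (m : ℕ) : PowerSeries ℚ :=
  psP + PowerSeries.C (m:ℚ) * psQ + (L - 1) * psR * L^m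

lemma osm_step (a : ℚ) (f g : ℕ → ℚ) (h0 : g 0 = f 0)
    (hs : ∀ n, g (n+1) = f (n+1) - a * f n) :
    (1 - PowerSeries.C a * PowerSeries.X) * PowerSeries.mk f = PowerSeries.mk g := by
  ext n
  rw [sub_mul, one_mul, map_sub, mul_assoc]
  cases n with
  | zero =>
    rw [PowerSeries.coeff_C_mul, PowerSeries.coeff_zero_X_mul]
    simp [h0]
  | succ n =>
    rw [PowerSeries.coeff_C_mul, PowerSeries.coeff_succ_X_mul, PowerSeries.coeff_mk,
      PowerSeries.coeff_mk, PowerSeries.coeff_mk, hs n]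

def p1f : ℕ → ℚ := fun n => match n with | 0 => 0 | n+1 => 19/3*16^n - 1/3*4^n
def p2f : ℕ → ℚ := fun n => match n with | 0 => 0 | 1 => 6 | n+2 => 76*16^n
def p3f : ℕ → ℚ := fun n => match n with | 0 => 0 | 1 => 6 | 2 => -20 | _+3 => 0
def r1f : ℕ → ℚ := fun n => match n with | 0 => 0 | n+1 => -5/21*16^n - 1/3*4^n + 4/7*2^n
def r2f : ℕ → ℚ := fun n => match n with | 0 => 0 | 1 => 0 | n+2 => -10/3*16^n - 2/3*4^n
def r3f : ℕ → ℚ := fun n => match n with | 0 => 0 | 1 => 0 | 2 => -4 | n+3 => -40*16^n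

lemma chainP1 : (1 - PowerSeries.C 2 * PowerSeries.X) * psP = PowerSeries.mk p1f := by
  apply osm_step
  · norm_num [p1f, pcf]
  · intro n
    show p1f (n+1) = pcf (n+1) - 2 * pcf n
    simp only [p1f, pcf, pow_succ]
    ring

lemma chainP2 : (1 - PowerSeries.C 4 * PowerSeries.X) * PowerSeries.mk p1f
    = PowerSeries.mk p2f := by
  apply osm_step
  · norm_num [p1f, p2f]
  · intro n
    match n with
    | 0 => norm_num [p1f, p2f]
    | n+1 =>
      show p2f (n+2) = p1f (n+2) - 4 * p1f (n+1)
      simp only [p1f, p2f, pow_succ]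
      ring

lemma chainP3 : (1 - PowerSeries.C 16 * PowerSeries.X) * PowerSeries.mk p2f
    = PowerSeries.mk p3f := by
  apply osm_step
  · norm_num [p2f, p3f]
  · intro n
    match n with
    | 0 => norm_num [p2f, p3f]
    | 1 => norm_num [p2f, p3f]
    | n+2 =>
      show p3f (n+3) = p2f (n+3) - 16 * p2f (n+2)
      simp only [p2f, p3f, pow_succ]
      ring

lemma chainR1 : (1 - PowerSeries.C 2 * PowerSeries.X) * psR = PowerSeries.mk r1f := by
  apply osm_step
  · norm_num [r1f, rcf]
  · intro n
    show r1f (n+1) = rcf (n+1) - 2 * rcf n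
    simp only [r1f, rcf, pow_succ]
    push_cast
    ring

lemma chainR2 : (1 - PowerSeries.C 2 * PowerSeries.X) * PowerSeries.mk r1f
    = PowerSeries.mk r2f := by
  apply osm_step
  · norm_num [r1f, r2f]
  · intro n
    match n with
    | 0 => norm_num [r1f, r2f]
    | n+1 =>
      show r2f (n+2) = r1f (n+2) - 2 * r1f (n+1)
      simp only [r1f, r2f, pow_succ]
      ring

lemma chainR3 : (1 - PowerSeries.C 4 * PowerSeries.X) * PowerSeries.mk r2f
    = PowerSeries.mk r3f := by
  apply osm_step
  · norm_num [r2f, r3f]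
  · intro n
    match n with
    | 0 => norm_num [r2f, r3f]
    | 1 => norm_num [r2f, r3f]
    | n+2 =>
      show r3f (n+3) = r2f (n+3) - 4 * r2f (n+2)
      simp only [r2f, r3f, pow_succ]
      ring

lemma mk_p3f_poly : (1 - PowerSeries.C 2 * PowerSeries.X) * PowerSeries.mk p3f
    = PowerSeries.C 6 * PowerSeries.X^1 + PowerSeries.C (-32) * PowerSeries.X^2
      + PowerSeries.C 40 * PowerSeries.X^3 := by
  have h : (1 - PowerSeries.C 2 * PowerSeries.X) * PowerSeries.mk p3f
      = PowerSeries.mk (fun n => match n with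
        | 0 => (0:ℚ) | 1 => 6 | 2 => -32 | 3 => 40 | _+4 => 0) := by
    apply osm_step
    · norm_num [p3f]
    · intro n
      match n with
      | 0 => norm_num [p3f]
      | 1 => norm_num [p3f]
      | 2 => norm_num [p3f]
      | n+3 => norm_num [p3f]
  rw [h]
  ext n
  rw [PowerSeries.coeff_mk, map_add, map_add, PowerSeries.coeff_C_mul, PowerSeries.coeff_C_mul,
    PowerSeries.coeff_C_mul, PowerSeries.coeff_X_pow, PowerSeries.coeff_X_pow,
    PowerSeries.coeff_X_pow]
  match n with
  | 0 => norm_num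
  | 1 => norm_num
  | 2 => norm_num
  | 3 => norm_num
  | n+4 =>
    rw [if_neg (by omega), if_neg (by omega), if_neg (by omega)]
    norm_num

lemma mk_r3f_poly : (1 - PowerSeries.C 16 * PowerSeries.X) * PowerSeries.mk r3f
    = PowerSeries.C (-4) * PowerSeries.X^2 + PowerSeries.C 24 * PowerSeries.X^3 := by
  have h : (1 - PowerSeries.C 16 * PowerSeries.X) * PowerSeries.mk r3f
      = PowerSeries.mk (fun n => match n with
        | 0 => (0:ℚ) | 1 => 0 | 2 => -4 | 3 => 24 | _+4 => 0) := by
    apply osm_step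
    · norm_num [r3f]
    · intro n
      match n with
      | 0 => norm_num [r3f]
      | 1 => norm_num [r3f]
      | 2 => norm_num [r3f]
      | n+3 =>
        show (match (n+4) with | 0 => (0:ℚ) | 1 => 0 | 2 => -4 | 3 => 24 | _+4 => 0)
          = r3f (n+4) - 16 * r3f (n+3)
        match n with
        | 0 => norm_num [r3f]
        | n+1 =>
          show (0:ℚ) = -40*16^(n+2) - 16 * (-40*16^(n+1))
          rw [pow_succ]
          ring
  rw [h]
  ext n
  rw [PowerSeries.coeff_mk, map_add, PowerSeries.coeff_C_mul, PowerSeries.coeff_C_mul,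
    PowerSeries.coeff_X_pow, PowerSeries.coeff_X_pow]
  match n with
  | 0 => norm_num
  | 1 => norm_num
  | 2 => norm_num
  | 3 => norm_num
  | n+4 =>
    rw [if_neg (by omega), if_neg (by omega)]
    norm_num
/-! ### Recurrences for FmS -/

lemma FmS_coeff (L : PowerSeries ℚ) (m n : ℕ) :
    PowerSeries.coeff n (FmS L m)
      = pcf n + (m:ℚ) * qcf n + PowerSeries.coeff n ((L - 1) * psR * L^m) := by
  rw [FmS, map_add, map_add, PowerSeries.coeff_C_mul, psP, psQ,
    PowerSeries.coeff_mk, PowerSeries.coeff_mk]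

lemma ladder_rec (L : PowerSeries ℚ)
    (hL : PowerSeries.X*L^2 + PowerSeries.X = L) (m n : ℕ) :
    PowerSeries.coeff (n+1) ((L - 1) * psR * L^(m+1))
      = PowerSeries.coeff n ((L - 1) * psR * L^m)
        + PowerSeries.coeff n ((L - 1) * psR * L^(m+2)) := by
  have h : (L - 1) * psR * L^(m+1)
      = PowerSeries.X * ((L - 1) * psR * L^m + (L - 1) * psR * L^(m+2)) := by
    linear_combination (-((L-1) * psR * L^m)) * hL
  rw [h, PowerSeries.coeff_succ_X_mul, map_add]

lemma ladder_rec0 (L : PowerSeries ℚ)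
    (hL : PowerSeries.X*L^2 + PowerSeries.X = L) (n : ℕ) :
    PowerSeries.coeff (n+1) ((L - 1) * psR)
      = PowerSeries.coeff n ((L - 1) * psR)
        + PowerSeries.coeff n ((L - 1) * psR * L) + (2 * rcf n - rcf (n+1)) := by
  have h : (L - 1) * psR
      = PowerSeries.X * ((L - 1) * psR + (L - 1) * psR * L)
        + (PowerSeries.C 2 * PowerSeries.X - 1) * psR := by
    have c2 : (PowerSeries.C) 2 = (2 : PowerSeries ℚ) := map_ofNat _ 2
    rw [c2]
    linear_combination (-psR) * hL
  have hc : PowerSeries.coeff (n+1) ((PowerSeries.C 2 * PowerSeries.X - 1) * psR)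
      = 2 * rcf n - rcf (n+1) := by
    rw [sub_mul, one_mul, map_sub, mul_assoc, PowerSeries.coeff_C_mul,
      PowerSeries.coeff_succ_X_mul, psR, PowerSeries.coeff_mk, PowerSeries.coeff_mk]
  calc PowerSeries.coeff (n+1) ((L - 1) * psR)
      = PowerSeries.coeff (n+1) (PowerSeries.X * ((L - 1) * psR + (L - 1) * psR * L)
          + (PowerSeries.C 2 * PowerSeries.X - 1) * psR) := by rw [← h]
    _ = _ := by rw [map_add, PowerSeries.coeff_succ_X_mul, map_add, hc]

lemma scalar0 (n : ℕ) :
    pcf (n+1) + (2 * rcf n - rcf (n+1)) = pcf n + (pcf n + qcf n) + 6*16^n := by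
  simp only [pcf, qcf, rcf, pow_succ]
  push_cast
  ring

lemma scalarm (m n : ℕ) :
    pcf (n+1) + ((m:ℚ)+1) * qcf (n+1)
      = (pcf n + (m:ℚ) * qcf n) + (pcf n + ((m:ℚ)+2) * qcf n)
        + ((16^n - 4^n)/3 + (8*(m:ℚ)+14)*16^n) := by
  simp only [pcf, qcf, pow_succ]
  ring

lemma FmS_rec0 (L : PowerSeries ℚ)
    (hL : PowerSeries.X*L^2 + PowerSeries.X = L) (n : ℕ) :
    PowerSeries.coeff (n+1) (FmS L 0)
      = PowerSeries.coeff n (FmS L 0) + PowerSeries.coeff n (FmS L 1) + 6*16^n := by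
  rw [FmS_coeff, FmS_coeff, FmS_coeff]
  have e0 : (L - 1) * psR * L^0 = (L - 1) * psR := by rw [pow_zero, mul_one]
  have e1 : (L - 1) * psR * L^1 = (L - 1) * psR * L := by rw [pow_one]
  rw [e0, e1, ladder_rec0 L hL n]
  push_cast
  linear_combination scalar0 n

lemma FmS_recm (L : PowerSeries ℚ)
    (hL : PowerSeries.X*L^2 + PowerSeries.X = L) (m n : ℕ) :
    PowerSeries.coeff (n+1) (FmS L (m+1))
      = PowerSeries.coeff n (FmS L m) + PowerSeries.coeff n (FmS L (m+2))
        + ((16^n - 4^n)/3 + (8*(m:ℚ)+14)*16^n) := by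
  rw [FmS_coeff, FmS_coeff, FmS_coeff, ladder_rec L hL m n]
  push_cast
  linear_combination scalarm m n

lemma FmS_coeff_zero (L : PowerSeries ℚ) (m : ℕ) :
    PowerSeries.coeff 0 (FmS L m) = 0 := by
  rw [FmS_coeff]
  have : PowerSeries.coeff 0 ((L - 1) * psR * L^m) = 0 := by
    rw [PowerSeries.coeff_zero_eq_constantCoeff, map_mul, map_mul]
    have : PowerSeries.constantCoeff psR = 0 := by
      rw [psR]
      rw [← PowerSeries.coeff_zero_eq_constantCoeff, PowerSeries.coeff_mk]
      norm_num [rcf]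
    rw [this]
    ring
  rw [this]
  norm_num [pcf, qcf]

/-! ### The key lemma -/

lemma keyL (L : PowerSeries ℚ) (hL : PowerSeries.X*L^2 + PowerSeries.X = L) :
    ∀ n m, (32:ℚ)^n * hashAux n epsX (phiM m) ((1:ℚ)/2^n)
      = PowerSeries.coeff n (FmS L m) := by
  intro n
  induction n with
  | zero =>
    intro m
    rw [hashAux_zero_apply, evI_phi_one, evI_phi_zero, FmS_coeff_zero]
    norm_num
  | succ n ih =>
    intro m
    have h16 : (32:ℚ)^n * (1/2)^n = 16^n := by rw [← mul_pow]; norm_num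
    have h4 : (32:ℚ)^n * (1/8)^n = 4^n := by rw [← mul_pow]; norm_num
    match m, Nat.even_or_odd m with
    | 0, _ =>
      have hrec : hashAux (n+1) epsX (phiM 0) ((1:ℚ)/2^(n+1))
          = (1/32)*(hashAux n epsX (phiM 0) ((1:ℚ)/2^n)
              + hashAux n epsX (phiM 1) ((1:ℚ)/2^n)) + (6/32)*(1/2)^n := by
        rw [hstep, T0_eps, T1_eps, T0_phi_even 0 rfl, T1_phi_zero]
        simp only [hashAux_add_left, hashAux_add_right, hashAux_smul_left, hashAux_smul_right,
          hashAux_one_left, hashAux_one_right, hash_t_t, hash_t_eps, hash_eps_t, hash_t_phi,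
          hash_eps_eps]
        ring
      rw [hrec, FmS_rec0 L hL n, ← ih 0, ← ih 1]
      linear_combination 6*h16
    | (k+1), Or.inr hodd =>
      have hk : k % 2 = 0 := by rcases hodd with ⟨j, hj⟩; omega
      have hrec : hashAux (n+1) epsX (phiM (k+1)) ((1:ℚ)/2^(n+1))
          = (1/32)*(hashAux n epsX (phiM k) ((1:ℚ)/2^n)
              + hashAux n epsX (phiM (k+2)) ((1:ℚ)/2^n))
            + (1/96)*((1/2)^n - (1/8)^n) + ((8*(k:ℚ)+14)/32)*(1/2)^n := by
        rw [hstep, T0_eps, T1_eps, T0_phi_odd k hk, T1_phi_odd (k+1) (by omega)]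
        simp only [hashAux_add_left, hashAux_add_right, hashAux_smul_left, hashAux_smul_right,
          hashAux_one_left, hashAux_one_right, hash_t_t, hash_t_eps, hash_eps_t, hash_t_phi,
          hash_eps_eps]
        push_cast
        ring
      rw [hrec, FmS_recm L hL k n, ← ih k, ← ih (k+2)]
      linear_combination (8*(k:ℚ)+14+1/3)*h16 + (-(1/3))*h4
    | (k+1), Or.inl heven =>
      have hk : k % 2 = 1 := by rcases heven with ⟨j, hj⟩; omega
      have hrec : hashAux (n+1) epsX (phiM (k+1)) ((1:ℚ)/2^(n+1))
          = (1/32)*(hashAux n epsX (phiM k) ((1:ℚ)/2^n)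
              + hashAux n epsX (phiM (k+2)) ((1:ℚ)/2^n))
            + (1/96)*((1/2)^n - (1/8)^n) + ((8*(k:ℚ)+14)/32)*(1/2)^n := by
        rw [hstep, T0_eps, T1_eps, T0_phi_even (k+1) (by omega), T1_phi_even k hk]
        simp only [hashAux_add_left, hashAux_add_right, hashAux_smul_left, hashAux_smul_right,
          hashAux_one_left, hashAux_one_right, hash_t_t, hash_t_eps, hash_eps_t, hash_t_phi,
          hash_eps_eps]
        push_cast
        ring
      rw [hrec, FmS_recm L hL k n, ← ih k, ← ih (k+2)]
      linear_combination (8*(k:ℚ)+14+1/3)*h16 + (-(1/3))*h4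
lemma invPow_den (n : ℕ) : ((1:ℚ)/2^n).den = 2^n := by
  rw [one_div]
  have h1 : ((2:ℚ)^n) = ((2^n : ℕ) : ℚ) := by push_cast; ring
  have h2 : 0 < 2^n := Nat.pow_pos (by norm_num)
  rw [h1, Rat.inv_natCast_den_of_pos h2]

/-- Lemma 2.6: with `E₁ = ε # φ₀` and `S = Σ E₁(2^{−n})(32w)ⁿ`,
`(1−16w)(1−4w)(1−2w)²·S = 4w(1−2w)² + (2w−12w²)·√(1−4w²)`. -/
theorem statement11 (s : PowerSeries ℚ)
    (hs1 : PowerSeries.constantCoeff s = 1)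
    (hs2 : s ^ 2 = 1 - 4 * PowerSeries.X ^ 2) :
    (1 - 16 * PowerSeries.X) * (1 - 4 * PowerSeries.X) * (1 - 2 * PowerSeries.X) ^ 2 *
        (PowerSeries.mk fun n => 32 ^ n * hash epsX (phiM 0) (invPow n)) =
      4 * PowerSeries.X * (1 - 2 * PowerSeries.X) ^ 2 +
        (2 * PowerSeries.X - 12 * PowerSeries.X ^ 2) * s := by
  set L : PowerSeries ℚ := PowerSeries.mk fun n => -(PowerSeries.coeff (n+1) s)/2 with hLdef
  have hsL : s = 1 - 2 * PowerSeries.X * L := by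
    ext n
    cases n with
    | zero =>
      rw [PowerSeries.coeff_zero_eq_constantCoeff, hs1]
      simp [map_sub, map_mul]
    | succ n =>
      have c2 : (2 : PowerSeries ℚ) * PowerSeries.X * L
          = PowerSeries.C 2 * (PowerSeries.X * L) := by
        rw [map_ofNat, mul_assoc]
      rw [map_sub, c2, PowerSeries.coeff_C_mul, PowerSeries.coeff_succ_X_mul, hLdef,
        PowerSeries.coeff_mk, PowerSeries.coeff_one]
      simp
      ring
  have h4X : (4 * PowerSeries.X : PowerSeries ℚ) ≠ 0 := by
    intro h
    have h1 : PowerSeries.coeff 1 (4 * PowerSeries.X : PowerSeries ℚ) = 4 := by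
      rw [show (4 : PowerSeries ℚ) * PowerSeries.X = PowerSeries.C 4 * PowerSeries.X from by
        rw [map_ofNat], PowerSeries.coeff_C_mul, PowerSeries.coeff_one_X]
      norm_num
    rw [h] at h1
    simp at h1
  have hL : PowerSeries.X * L^2 + PowerSeries.X = L := by
    have h0 : (4 * PowerSeries.X) * (PowerSeries.X * L^2 + PowerSeries.X - L) = 0 := by
      linear_combination hs2 - (s + 1 - 2*PowerSeries.X*L) * hsL
    exact sub_eq_zero.mp ((mul_eq_zero.mp h0).resolve_left h4X)
  have hseq : (PowerSeries.mk fun n => (32:ℚ)^n * hash epsX (phiM 0) (invPow n)) = FmS L 0 := by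
    ext n
    rw [PowerSeries.coeff_mk, ← keyL L hL n 0]
    congr 1
    show hashAux (padicValNat 2 ((invPow n).1.den)) epsX (phiM 0) (invPow n).1
        = hashAux n epsX (phiM 0) ((1:ℚ)/2^n)
    have hd : padicValNat 2 ((invPow n).1.den) = n := by
      show padicValNat 2 (((1:ℚ)/2^n).den) = n
      rw [invPow_den]
      exact padicValNat.prime_pow n
    rw [hd]
    rfl
  have hF0 : FmS L 0 = psP + (L - 1) * psR := by
    rw [FmS]
    simp
  have hDP : (1 - PowerSeries.C 2 * PowerSeries.X) *
      ((1 - PowerSeries.C 16 * PowerSeries.X) *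
        ((1 - PowerSeries.C 4 * PowerSeries.X) *
          ((1 - PowerSeries.C 2 * PowerSeries.X) * psP)))
      = PowerSeries.C 6 * PowerSeries.X^1 + PowerSeries.C (-32) * PowerSeries.X^2
        + PowerSeries.C 40 * PowerSeries.X^3 := by
    rw [chainP1, chainP2, chainP3, mk_p3f_poly]
  have hDR : (1 - PowerSeries.C 16 * PowerSeries.X) *
      ((1 - PowerSeries.C 4 * PowerSeries.X) *
        ((1 - PowerSeries.C 2 * PowerSeries.X) *
          ((1 - PowerSeries.C 2 * PowerSeries.X) * psR)))
      = PowerSeries.C (-4) * PowerSeries.X^2 + PowerSeries.C 24 * PowerSeries.X^3 := by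
    rw [chainR1, chainR2, chainR3, mk_r3f_poly]
  simp only [map_neg, map_ofNat] at hDP hDR
  rw [hseq, hF0, hsL]
  linear_combination hDP + (L - 1) * hDR

end
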